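/- arXiv:1102.3132 — 3 statements merged into one kernel-verified Lean document; each statement's English description precedes it below -/
import Mathlib

section
/- Let X be a finite alphabet, l, r positive integers, f : X^r → ℝ≥0 not identically zero. Suppose strictly positive normalized messages m_{v→f}, m_{f→v} : X → ℝ (each summing to 1) satisfy the BP equations: m_{v→f}(x) = m_{f→v}(x)^{l−1}/Σ_z m_{f→v}(z)^{l−1}, and m_{f→v}(x) = B(x)/Σ_z B(z) where B(x) := Σ_{i=1}^r Σ_{x∈X^r : x_i = x} f(x) ∏_{j≠i} m_{v→f}(x_j). Define Z_v := Σ_x m_{f→v}(x)^l, Z_f := Σ_{x∈X^r} f(x) ∏_{i=1}^r m_{v→f}(x_i), Z_{fv} := Σ_x m_{f→v}(x) m_{v→f}(x), and set ν(x) := m_{f→v}(x)^l/Z_v, μ(x) := f(x)∏_{i=1}^r m_{v→f}(x_i)/Z_f. Then (ν,μ) satisfies the consistency condition (1/r)Σ_{i=1}^r Σ_{x∈X^r : x_i = z} μ(x) = ν(z) for all z ∈ X, and (l/r)H(μ) − (l−1)H(ν) + (l/r)Σ_{x∈X^r} μ(x) log f(x) = (l/r) log Z_f + log Z_v − l log Z_{fv}.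 -/
open Finset

/-- The factor-to-variable belief propagation aggregate
`B(x) = Σ_{i=1}^r Σ_{y ∈ X^r : y_i = x} f(y) ∏_{j≠i} m(y_j)`. -/
noncomputable def bpB {X : Type*} [Fintype X] [DecidableEq X] {r : ℕ}
    (f : (Fin r → X) → ℝ) (m : X → ℝ) (x : X) : ℝ :=
  ∑ i : Fin r, ∑ y ∈ Finset.univ.filter (fun y : Fin r → X => y i = x),
    f y * ∏ j ∈ Finset.univ.erase i, m (y j)

/-- at a BP fixed point, the beliefs `(ν,μ)` defined from the messages satisfy
the consistency condition, and `−F_Bethe(ν,μ)` equals `(l/r)log Z_f + log Z_v − l·log Z_fv`. -/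
theorem bp_fixed_point_bethe_identity
    {X : Type*} [Fintype X] [DecidableEq X] [Nonempty X]
    (l r : ℕ) (hl : 0 < l) (hr : 0 < r)
    (f : (Fin r → X) → ℝ) (hf : ∀ x, 0 ≤ f x) (hfne : ∃ x, f x ≠ 0)
    (mvf mfv : X → ℝ) (hmvf : ∀ x, 0 < mvf x) (hmfv : ∀ x, 0 < mfv x)
    (hmvf1 : ∑ x : X, mvf x = 1) (hmfv1 : ∑ x : X, mfv x = 1)
    (hbp1 : ∀ x, mvf x = mfv x ^ (l - 1) / ∑ z : X, mfv z ^ (l - 1))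
    (hbp2 : ∀ x, mfv x = bpB f mvf x / ∑ z : X, bpB f mvf z)
    (Zv Zf Zfv : ℝ)
    (hZv : Zv = ∑ x : X, mfv x ^ l)
    (hZf : Zf = ∑ y : Fin r → X, f y * ∏ i, mvf (y i))
    (hZfv : Zfv = ∑ x : X, mfv x * mvf x)
    (ν : X → ℝ) (hνdef : ∀ x, ν x = mfv x ^ l / Zv)
    (μ : (Fin r → X) → ℝ) (hμdef : ∀ x, μ x = (f x * ∏ i, mvf (x i)) / Zf) :
    (∀ z : X,
      (1 / (r : ℝ)) * ∑ i : Fin r,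
          ∑ x ∈ Finset.univ.filter (fun x : Fin r → X => x i = z), μ x = ν z) ∧
    ((l : ℝ) / (r : ℝ)) * (-∑ x : Fin r → X, μ x * Real.log (μ x))
        - ((l : ℝ) - 1) * (-∑ x : X, ν x * Real.log (ν x))
        + ((l : ℝ) / (r : ℝ)) * ∑ x : Fin r → X, μ x * Real.log (f x)
      = ((l : ℝ) / (r : ℝ)) * Real.log Zf + Real.log Zv - (l : ℝ) * Real.log Zfv := by
  classical
  have hrR : (0:ℝ) < r := by exact_mod_cast hr
  set L : ℝ := (l : ℝ) with hL
  set S1 : ℝ := ∑ z : X, mfv z ^ (l - 1) with hS1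
  set SB : ℝ := ∑ z : X, bpB f mvf z with hSB
  have hS1pos : 0 < S1 :=
    Finset.sum_pos (fun z _ => pow_pos (hmfv z) _) Finset.univ_nonempty
  have hZvpos : 0 < Zv := by
    rw [hZv]; exact Finset.sum_pos (fun z _ => pow_pos (hmfv z) _) Finset.univ_nonempty
  have hZfpos : 0 < Zf := by
    obtain ⟨x₀, hx₀⟩ := hfne
    rw [hZf]
    refine Finset.sum_pos' (fun y _ => mul_nonneg (hf y)
      (Finset.prod_nonneg fun i _ => (hmvf (y i)).le)) ⟨x₀, Finset.mem_univ x₀, ?_⟩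
    exact mul_pos ((hf x₀).lt_of_ne (Ne.symm hx₀))
      (Finset.prod_pos fun i _ => hmvf (x₀ i))
  have hSBne : SB ≠ 0 := by
    intro h
    have := hbp2 (Classical.arbitrary X)
    rw [h, div_zero] at this
    exact (hmfv _).ne' this
  have hBz : ∀ z, bpB f mvf z = mfv z * SB := by
    intro z
    rw [hbp2 z]
    field_simp
  have hA : ∀ z : X, (∑ i : Fin r, ∑ x ∈ Finset.univ.filter (fun x : Fin r → X => x i = z),
      f x * ∏ j, mvf (x j)) = mvf z * bpB f mvf z := by
    intro z
    rw [bpB, Finset.mul_sum]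
    refine Finset.sum_congr rfl fun i _ => ?_
    rw [Finset.mul_sum]
    refine Finset.sum_congr rfl fun x hx => ?_
    have hxi : x i = z := (Finset.mem_filter.mp hx).2
    rw [← Finset.mul_prod_erase Finset.univ (fun j => mvf (x j)) (Finset.mem_univ i), hxi]
    ring
  have hll : l - 1 + 1 = l := Nat.succ_pred_eq_of_pos hl
  have hmvfB : ∀ z, mvf z * bpB f mvf z = mfv z ^ l * SB / S1 := by
    intro z
    rw [hBz z, hbp1 z]
    have hpow : mfv z ^ (l - 1) * mfv z = mfv z ^ l := by rw [← pow_succ, hll]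
    field_simp
    linear_combination hpow
  have hfib : ∀ i : Fin r, (∑ z : X, ∑ x ∈ Finset.univ.filter
      (fun x : Fin r → X => x i = z), f x * ∏ j, mvf (x j)) = Zf := by
    intro i
    rw [hZf]
    exact Finset.sum_fiberwise _ _ _
  have hrZf : (r:ℝ) * Zf = Zv * SB / S1 := by
    have h1 : ∑ z : X, mvf z * bpB f mvf z = (r:ℝ) * Zf := by
      calc ∑ z : X, mvf z * bpB f mvf z
          = ∑ z : X, ∑ i : Fin r, ∑ x ∈ Finset.univ.filter
              (fun x : Fin r → X => x i = z), f x * ∏ j, mvf (x j) :=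
            Finset.sum_congr rfl fun z _ => (hA z).symm
        _ = ∑ i : Fin r, ∑ z : X, ∑ x ∈ Finset.univ.filter
              (fun x : Fin r → X => x i = z), f x * ∏ j, mvf (x j) := Finset.sum_comm
        _ = ∑ _i : Fin r, Zf := Finset.sum_congr rfl fun i _ => hfib i
        _ = (r:ℝ) * Zf := by
            rw [Finset.sum_const, Finset.card_univ, Fintype.card_fin, nsmul_eq_mul]
    have h2 : ∑ z : X, mvf z * bpB f mvf z = Zv * SB / S1 := by
      simp only [hmvfB]
      rw [← Finset.sum_div, ← Finset.sum_mul, ← hZv]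
    rw [← h1, h2]
  have hcons : ∀ z : X, (∑ i : Fin r, ∑ x ∈ Finset.univ.filter
      (fun x : Fin r → X => x i = z), μ x) = (r:ℝ) * ν z := by
    intro z
    have h1 : (∑ i : Fin r, ∑ x ∈ Finset.univ.filter
        (fun x : Fin r → X => x i = z), μ x)
        = (∑ i : Fin r, ∑ x ∈ Finset.univ.filter
        (fun x : Fin r → X => x i = z), f x * ∏ j, mvf (x j)) / Zf := by
      simp only [hμdef]
      rw [Finset.sum_div]
      exact Finset.sum_congr rfl fun i _ => by rw [Finset.sum_div]
    rw [h1, hA z, hmvfB z, hνdef z]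
    have h2 : Zv * SB = (r:ℝ) * Zf * S1 := by
      field_simp [hS1pos.ne'] at hrZf
      linarith
    field_simp [hS1pos.ne', hZfpos.ne', hZvpos.ne']
    linear_combination (mfv z ^ l) * h2
  refine ⟨fun z => by rw [hcons z]; field_simp, ?_⟩
  -- entropy identity
  have hμ1 : ∑ x : Fin r → X, μ x = 1 := by
    simp only [hμdef]
    rw [← Finset.sum_div, ← hZf, div_self hZfpos.ne']
  have hν1 : ∑ z : X, ν z = 1 := by
    simp only [hνdef]
    rw [← Finset.sum_div, ← hZv, div_self hZvpos.ne']
  have hcast : ((l - 1 : ℕ) : ℝ) = L - 1 := by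
    rw [hL, Nat.cast_sub hl, Nat.cast_one]
  have hlogmvf : ∀ z, Real.log (mvf z) = (L - 1) * Real.log (mfv z) - Real.log S1 := by
    intro z
    rw [hbp1 z, Real.log_div (pow_pos (hmfv z) _).ne' hS1pos.ne', Real.log_pow, hcast]
  have hμlog : ∀ x, μ x * Real.log (μ x)
      = μ x * Real.log (f x) + μ x * (∑ i, Real.log (mvf (x i))) - μ x * Real.log Zf := by
    intro x
    rcases eq_or_lt_of_le (hf x) with h0 | hpos
    · have hμ0 : μ x = 0 := by rw [hμdef, ← h0]; simp
      simp [hμ0]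
    · have hprod : 0 < ∏ i, mvf (x i) := Finset.prod_pos fun i _ => hmvf (x i)
      have hlog : Real.log (μ x)
          = Real.log (f x) + (∑ i, Real.log (mvf (x i))) - Real.log Zf := by
        rw [hμdef, Real.log_div (mul_pos hpos hprod).ne' hZfpos.ne',
          Real.log_mul hpos.ne' hprod.ne',
          Real.log_prod (fun i _ => (hmvf (x i)).ne')]
      rw [hlog]; ring
  have hmidsum : ∑ x : Fin r → X, μ x * (∑ i, Real.log (mvf (x i)))
      = (r:ℝ) * ∑ z : X, ν z * Real.log (mvf z) := by
    calc ∑ x : Fin r → X, μ x * (∑ i, Real.log (mvf (x i)))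
        = ∑ x : Fin r → X, ∑ i : Fin r, μ x * Real.log (mvf (x i)) := by
          exact Finset.sum_congr rfl fun x _ => Finset.mul_sum _ _ _
      _ = ∑ i : Fin r, ∑ x : Fin r → X, μ x * Real.log (mvf (x i)) := Finset.sum_comm
      _ = ∑ i : Fin r, ∑ z : X, ∑ x ∈ Finset.univ.filter
            (fun x : Fin r → X => x i = z), μ x * Real.log (mvf (x i)) := by
          exact Finset.sum_congr rfl fun i _ => (Finset.sum_fiberwise _ _ _).symm
      _ = ∑ i : Fin r, ∑ z : X, (∑ x ∈ Finset.univ.filter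
            (fun x : Fin r → X => x i = z), μ x) * Real.log (mvf z) := by
          refine Finset.sum_congr rfl fun i _ => Finset.sum_congr rfl fun z _ => ?_
          rw [Finset.sum_mul]
          refine Finset.sum_congr rfl fun x hx => ?_
          rw [(Finset.mem_filter.mp hx).2]
      _ = ∑ z : X, ∑ i : Fin r, (∑ x ∈ Finset.univ.filter
            (fun x : Fin r → X => x i = z), μ x) * Real.log (mvf z) := Finset.sum_comm
      _ = ∑ z : X, ((r:ℝ) * ν z) * Real.log (mvf z) := by
          refine Finset.sum_congr rfl fun z _ => ?_
          rw [← Finset.sum_mul, hcons z]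
      _ = (r:ℝ) * ∑ z : X, ν z * Real.log (mvf z) := by
          rw [Finset.mul_sum]; exact Finset.sum_congr rfl fun z _ => by ring
  set A : ℝ := ∑ x : Fin r → X, μ x * Real.log (f x) with hAdef
  set Nm : ℝ := ∑ z : X, ν z * Real.log (mfv z) with hNm
  have hμlogμ : ∑ x : Fin r → X, μ x * Real.log (μ x)
      = A + (r:ℝ) * ((L - 1) * Nm - Real.log S1) - Real.log Zf := by
    have h1 : ∑ x : Fin r → X, μ x * Real.log (μ x)
        = A + (∑ x : Fin r → X, μ x * (∑ i, Real.log (mvf (x i))))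
          - (∑ x : Fin r → X, μ x) * Real.log Zf := by
      rw [Finset.sum_mul, hAdef, ← Finset.sum_add_distrib, ← Finset.sum_sub_distrib]
      exact Finset.sum_congr rfl fun x _ => hμlog x
    rw [h1, hμ1, one_mul, hmidsum]
    have h2 : ∑ z : X, ν z * Real.log (mvf z) = (L - 1) * Nm - Real.log S1 := by
      calc ∑ z : X, ν z * Real.log (mvf z)
          = ∑ z : X, ((L - 1) * (ν z * Real.log (mfv z)) - ν z * Real.log S1) := by
            refine Finset.sum_congr rfl fun z _ => ?_
            rw [hlogmvf z]; ring
        _ = (L - 1) * Nm - Real.log S1 := by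
            rw [Finset.sum_sub_distrib, ← Finset.mul_sum, ← Finset.sum_mul, hν1,
              one_mul, hNm]
    rw [h2]
  have hνlogν : ∑ z : X, ν z * Real.log (ν z) = L * Nm - Real.log Zv := by
    calc ∑ z : X, ν z * Real.log (ν z)
        = ∑ z : X, (L * (ν z * Real.log (mfv z)) - ν z * Real.log Zv) := by
          refine Finset.sum_congr rfl fun z _ => ?_
          rw [hνdef z, Real.log_div (pow_pos (hmfv z) _).ne' hZvpos.ne', Real.log_pow, ← hL]
          have hνz : ν z = mfv z ^ l / Zv := hνdef z
          rw [← hνz]; ring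
      _ = L * Nm - Real.log Zv := by
          rw [Finset.sum_sub_distrib, ← Finset.mul_sum, ← Finset.sum_mul, hν1,
            one_mul, hNm]
  have hZfveq : Zfv = Zv / S1 := by
    rw [hZfv, hZv]
    rw [Finset.sum_div]
    refine Finset.sum_congr rfl fun z _ => ?_
    rw [hbp1 z]
    have hpow : mfv z ^ (l - 1) * mfv z = mfv z ^ l := by rw [← pow_succ, hll]
    field_simp
    linear_combination hpow
  have hlogZfv : Real.log Zfv = Real.log Zv - Real.log S1 := by
    rw [hZfveq, Real.log_div hZvpos.ne' hS1pos.ne']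
  rw [hμlogμ, hνlogν, hlogZfv]
  field_simp
  ring
end

section
/- Let X be a finite alphabet, l, r positive integers, f : X^r → ℝ≥0. Let m_{v→f}, m_{f→v} : X → ℝ be strictly positive normalized messages (each summing to 1), h : X → ℝ strictly positive, and suppose: m_{v→f}(x) = h(x)m_{f→v}(x)^{l−1}/Σ_z h(z)m_{f→v}(z)^{l−1}; m_{f→v}(x) = B(x)/Σ_z B(z) with B(x) := Σ_{i=1}^r Σ_{x∈X^r : x_i = x} f(x)∏_{j≠i} m_{v→f}(x_j). Define Z_f := Σ_{x∈X^r} f(x)∏_{i=1}^r m_{v→f}(x_i), Z_v(x) := m_{f→v}(x)^l, Z_v := Σ_x h(x)Z_v(x), Z_{fv} := Σ_x m_{f→v}(x)m_{v→f}(x), ν(x) := h(x)m_{f→v}(x)^l/Z_v, μ(x) := f(x)∏_{i=1}^r m_{v→f}(x_i)/Z_f. Then (ν,μ) satisfies the consistency condition (1/r)Σ_{i=1}^r Σ_{x∈X^r : x_i = z} μ(x) = ν(z) for all z ∈ X, and (l/r)H(μ) − (l−1)H(ν) + (l/r)Σ_{x∈X^r} μ(x) log f(x) = (l/r) log Z_f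 + log Z_v − l log Z_{fv} − Σ_{x∈X} ν(x) log h(x) = (l/r) log Z_f + Σ_{x∈X} ν(x) log Z_v(x) − l log Z_{fv} + H(ν). -/
open Finset

/-- at a stationary point of the fixed-variable-type maximization (h-weighted
BP fixed point), the induced beliefs `(ν,μ)` are consistent and `−F_Bethe(ν,μ)` equals both
`(l/r)log Z_f + log Z_v − l log Z_fv − Σ ν log h` and
`(l/r)log Z_f + Σ ν(x) log Z_v(x) − l log Z_fv + H(ν)`. -/
theorem fixed_variable_type_stationary_value
    {X : Type*} [Fintype X] [DecidableEq X] [Nonempty X]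
    (l r : ℕ) (hl : 0 < l) (hr : 0 < r)
    (f : (Fin r → X) → ℝ) (hf : ∀ x, 0 ≤ f x)
    (mvf mfv h : X → ℝ) (hmvf : ∀ x, 0 < mvf x) (hmfv : ∀ x, 0 < mfv x)
    (hh : ∀ x, 0 < h x)
    (hmvf1 : ∑ x : X, mvf x = 1) (hmfv1 : ∑ x : X, mfv x = 1)
    (hbp1 : ∀ x, mvf x = h x * mfv x ^ (l - 1) / ∑ z : X, h z * mfv z ^ (l - 1))
    (hbp2 : ∀ x, mfv x = bpB f mvf x / ∑ z : X, bpB f mvf z)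
    (Zf : ℝ) (hZf : Zf = ∑ y : Fin r → X, f y * ∏ i, mvf (y i))
    (Zvx : X → ℝ) (hZvx : ∀ x, Zvx x = mfv x ^ l)
    (Zv : ℝ) (hZv : Zv = ∑ x : X, h x * Zvx x)
    (Zfv : ℝ) (hZfv : Zfv = ∑ x : X, mfv x * mvf x)
    (ν : X → ℝ) (hνdef : ∀ x, ν x = h x * mfv x ^ l / Zv)
    (μ : (Fin r → X) → ℝ) (hμdef : ∀ x, μ x = (f x * ∏ i, mvf (x i)) / Zf) :
    (∀ z : X,
      (1 / (r : ℝ)) * ∑ i : Fin r,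
          ∑ x ∈ Finset.univ.filter (fun x : Fin r → X => x i = z), μ x = ν z) ∧
    (((l : ℝ) / (r : ℝ)) * (-∑ x : Fin r → X, μ x * Real.log (μ x))
        - ((l : ℝ) - 1) * (-∑ x : X, ν x * Real.log (ν x))
        + ((l : ℝ) / (r : ℝ)) * ∑ x : Fin r → X, μ x * Real.log (f x)
      = ((l : ℝ) / (r : ℝ)) * Real.log Zf + Real.log Zv - (l : ℝ) * Real.log Zfv
          - ∑ x : X, ν x * Real.log (h x)) ∧
    (((l : ℝ) / (r : ℝ)) * Real.log Zf + Real.log Zv - (l : ℝ) * Real.log Zfv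
          - ∑ x : X, ν x * Real.log (h x)
      = ((l : ℝ) / (r : ℝ)) * Real.log Zf + ∑ x : X, ν x * Real.log (Zvx x)
          - (l : ℝ) * Real.log Zfv + (-∑ x : X, ν x * Real.log (ν x))) := by
  have hr' : (0:ℝ) < r := Nat.cast_pos.mpr hr
  set C1 : ℝ := ∑ z : X, h z * mfv z ^ (l - 1) with hC1def
  set C2 : ℝ := ∑ z : X, bpB f mvf z with hC2def
  have hC1pos : 0 < C1 :=
    Finset.sum_pos (fun z _ => mul_pos (hh z) (pow_pos (hmfv z) _)) univ_nonempty
  have hBnn : ∀ z : X, 0 ≤ bpB f mvf z := fun z =>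
    Finset.sum_nonneg fun i _ => Finset.sum_nonneg fun y _ =>
      mul_nonneg (hf y) (Finset.prod_nonneg fun j _ => (hmvf _).le)
  have hC2nn : 0 ≤ C2 := Finset.sum_nonneg fun z _ => hBnn z
  have hC2pos : 0 < C2 := by
    rcases hC2nn.lt_or_eq with hlt | heq
    · exact hlt
    · exfalso
      obtain ⟨x⟩ := ‹Nonempty X›
      have := hbp2 x
      rw [← heq, div_zero] at this
      exact (hmfv x).ne' this
  have hBz : ∀ z : X, bpB f mvf z = mfv z * C2 := by
    intro z
    rw [hbp2 z]
    field_simp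
  have hpow : ∀ z : X, mfv z ^ (l - 1) * mfv z = mfv z ^ l := by
    intro z
    rw [← pow_succ, Nat.sub_add_cancel hl]
  have hhm : ∀ z : X, h z * mfv z ^ (l - 1) = mvf z * C1 := by
    intro z
    rw [hbp1 z]
    field_simp
  -- key counting identity: ∑ z, mvf z * B z = r * Zf
  have hsum1 : ∑ z : X, mvf z * bpB f mvf z = (r : ℝ) * Zf := by
    have step : ∀ i : Fin r,
        ∑ z : X, ∑ y ∈ Finset.univ.filter (fun y : Fin r → X => y i = z),
          mvf z * (f y * ∏ j ∈ Finset.univ.erase i, mvf (y j)) = Zf := by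
      intro i
      have : ∀ z : X, ∑ y ∈ Finset.univ.filter (fun y : Fin r → X => y i = z),
          mvf z * (f y * ∏ j ∈ Finset.univ.erase i, mvf (y j))
          = ∑ y ∈ Finset.univ.filter (fun y : Fin r → X => y i = z),
            f y * ∏ j, mvf (y j) := by
        intro z
        refine Finset.sum_congr rfl fun y hy => ?_
        have hyz : y i = z := (Finset.mem_filter.mp hy).2
        rw [← Finset.mul_prod_erase Finset.univ (fun j => mvf (y j)) (Finset.mem_univ i), hyz]
        ring
      rw [Finset.sum_congr rfl fun z _ => this z,
        Finset.sum_fiberwise Finset.univ (fun y : Fin r → X => y i) (fun y => f y * ∏ j, mvf (y j)),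
        hZf]
    calc ∑ z : X, mvf z * bpB f mvf z
        = ∑ i : Fin r, ∑ z : X, ∑ y ∈ Finset.univ.filter (fun y : Fin r → X => y i = z),
            mvf z * (f y * ∏ j ∈ Finset.univ.erase i, mvf (y j)) := by
          rw [Finset.sum_comm]
          refine Finset.sum_congr rfl fun z _ => ?_
          simp only [bpB, Finset.mul_sum]
      _ = ∑ i : Fin r, Zf := Finset.sum_congr rfl fun i _ => step i
      _ = (r : ℝ) * Zf := by rw [Finset.sum_const, Finset.card_univ, Fintype.card_fin,
            nsmul_eq_mul]
  have hZfvpos : 0 < Zfv := by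
    rw [hZfv]
    exact Finset.sum_pos (fun z _ => mul_pos (hmfv z) (hmvf z)) univ_nonempty
  have hrZf : (r : ℝ) * Zf = C2 * Zfv := by
    rw [← hsum1, hZfv, Finset.mul_sum]
    exact Finset.sum_congr rfl fun z _ => by rw [hBz z]; ring
  have hZfpos : 0 < Zf := by
    have : (0:ℝ) < (r:ℝ) * Zf := by rw [hrZf]; exact mul_pos hC2pos hZfvpos
    nlinarith
  have hZvC : Zv = C1 * Zfv := by
    rw [hZv, hZfv, Finset.mul_sum]
    refine Finset.sum_congr rfl fun z _ => ?_
    rw [hZvx z, ← hpow z, ← mul_assoc, hhm z]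
    ring
  have hZvpos : 0 < Zv := by rw [hZvC]; exact mul_pos hC1pos hZfvpos
  -- consistency
  have hcons : ∀ z : X,
      (1 / (r : ℝ)) * ∑ i : Fin r,
        ∑ x ∈ Finset.univ.filter (fun x : Fin r → X => x i = z), μ x = ν z := by
    intro z
    have hinner : ∑ i : Fin r,
        ∑ x ∈ Finset.univ.filter (fun x : Fin r → X => x i = z), μ x
        = mvf z * bpB f mvf z / Zf := by
      rw [bpB, Finset.mul_sum, Finset.sum_div]
      refine Finset.sum_congr rfl fun i _ => ?_
      rw [Finset.mul_sum, Finset.sum_div]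
      refine Finset.sum_congr rfl fun x hx => ?_
      have hxz : x i = z := (Finset.mem_filter.mp hx).2
      rw [hμdef x, ← Finset.mul_prod_erase Finset.univ (fun j => mvf (x j)) (Finset.mem_univ i),
        hxz]
      ring
    rw [hinner, hBz z, hνdef z]
    have h1 : mvf z * C1 = h z * mfv z ^ (l-1) := (hhm z).symm
    field_simp
    linear_combination (mvf z * (mfv z * C2)) * hZvC - (h z * (mfv z ^ (l-1) * mfv z)) * hrZf
      + (mfv z * C2 * Zfv) * h1 + (h z * (r:ℝ) * Zf) * hpow z
  refine ⟨hcons, ?_, ?_⟩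
  -- normalizations
  · have hν1 : ∑ z : X, ν z = 1 := by
      rw [Finset.sum_congr rfl fun z _ => hνdef z, ← Finset.sum_div]
      rw [show ∑ z : X, h z * mfv z ^ l = Zv by
        rw [hZv]; exact Finset.sum_congr rfl fun z _ => by rw [hZvx z]]
      exact div_self hZvpos.ne'
    have hμ1 : ∑ x : Fin r → X, μ x = 1 := by
      rw [Finset.sum_congr rfl fun x _ => hμdef x, ← Finset.sum_div, ← hZf]
      exact div_self hZfpos.ne'
    have hlogν : ∀ z : X, Real.log (ν z)
        = Real.log (h z) + (l:ℝ) * Real.log (mfv z) - Real.log Zv := by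
      intro z
      rw [hνdef z, Real.log_div (mul_pos (hh z) (pow_pos (hmfv z) l)).ne' hZvpos.ne',
        Real.log_mul (hh z).ne' (pow_pos (hmfv z) l).ne', Real.log_pow]
    have E1 : ∑ z : X, ν z * Real.log (ν z)
        = ∑ z : X, ν z * Real.log (h z) + (l:ℝ) * ∑ z : X, ν z * Real.log (mfv z)
          - Real.log Zv := by
      have step : ∑ z : X, ν z * Real.log (ν z)
          = ∑ z : X, ν z * (Real.log (h z) + (l:ℝ) * Real.log (mfv z) - Real.log Zv) :=
        Finset.sum_congr rfl fun z _ => by rw [hlogν z]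
      rw [step]
      simp only [mul_sub, mul_add]
      rw [Finset.sum_sub_distrib, Finset.sum_add_distrib, ← Finset.sum_mul, hν1, one_mul]
      congr 1
      congr 1
      rw [Finset.mul_sum]
      exact Finset.sum_congr rfl fun z _ => by ring
    have hlogmvf : ∀ z : X, Real.log (mvf z)
        = Real.log (h z) + ((l:ℝ) - 1) * Real.log (mfv z) - Real.log C1 := by
      intro z
      rw [hbp1 z, Real.log_div (mul_pos (hh z) (pow_pos (hmfv z) (l-1))).ne' hC1pos.ne',
        Real.log_mul (hh z).ne' (pow_pos (hmfv z) (l-1)).ne', Real.log_pow]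
      rw [Nat.cast_sub hl, Nat.cast_one]
    have E3 : ∑ z : X, ν z * Real.log (mvf z)
        = ∑ z : X, ν z * Real.log (h z) + ((l:ℝ) - 1) * ∑ z : X, ν z * Real.log (mfv z)
          - Real.log C1 := by
      have step : ∑ z : X, ν z * Real.log (mvf z)
          = ∑ z : X, ν z * (Real.log (h z) + ((l:ℝ) - 1) * Real.log (mfv z) - Real.log C1) :=
        Finset.sum_congr rfl fun z _ => by rw [hlogmvf z]
      rw [step]
      simp only [mul_sub, mul_add]
      rw [Finset.sum_sub_distrib, Finset.sum_add_distrib, ← Finset.sum_mul, hν1, one_mul]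
      congr 1
      congr 1
      rw [Finset.mul_sum]
      exact Finset.sum_congr rfl fun z _ => by ring
    have E4 : Real.log Zv = Real.log C1 + Real.log Zfv := by
      rw [hZvC, Real.log_mul hC1pos.ne' hZfvpos.ne']
    -- pointwise μ log identity
    have hpt : ∀ x : Fin r → X, μ x * Real.log (μ x) - μ x * Real.log (f x)
        = μ x * (∑ i : Fin r, Real.log (mvf (x i))) - μ x * Real.log Zf := by
      intro x
      rcases (hf x).lt_or_eq with hfx | hfx
      · have hprod : (0:ℝ) < ∏ i, mvf (x i) := Finset.prod_pos fun i _ => hmvf (x i)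
        have hlog : Real.log (μ x) = Real.log (f x) + ∑ i : Fin r, Real.log (mvf (x i))
            - Real.log Zf := by
          rw [hμdef x, Real.log_div (mul_pos hfx hprod).ne' hZfpos.ne',
            Real.log_mul hfx.ne' hprod.ne',
            Real.log_prod fun i _ => (hmvf (x i)).ne']
        rw [hlog]; ring
      · have hμ0 : μ x = 0 := by rw [hμdef x, ← hfx, zero_mul, zero_div]
        rw [hμ0]; ring
    have E2 : ∑ x : Fin r → X, μ x * Real.log (μ x) - ∑ x : Fin r → X, μ x * Real.log (f x)
        = ∑ x : Fin r → X, μ x * (∑ i : Fin r, Real.log (mvf (x i))) - Real.log Zf := by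
      rw [← Finset.sum_sub_distrib, Finset.sum_congr rfl fun x _ => hpt x,
        Finset.sum_sub_distrib, ← Finset.sum_mul, hμ1, one_mul]
    have hswap : ∑ x : Fin r → X, μ x * (∑ i : Fin r, Real.log (mvf (x i)))
        = (r:ℝ) * ∑ z : X, ν z * Real.log (mvf z) := by
      calc ∑ x : Fin r → X, μ x * (∑ i : Fin r, Real.log (mvf (x i)))
          = ∑ i : Fin r, ∑ x : Fin r → X, μ x * Real.log (mvf (x i)) := by
            rw [Finset.sum_comm]
            exact Finset.sum_congr rfl fun x _ => Finset.mul_sum _ _ _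
        _ = ∑ i : Fin r, ∑ z : X, ∑ x ∈ Finset.univ.filter (fun x : Fin r → X => x i = z),
              μ x * Real.log (mvf (x i)) := by
            exact Finset.sum_congr rfl fun i _ =>
              (Finset.sum_fiberwise Finset.univ (fun x : Fin r → X => x i)
                (fun x => μ x * Real.log (mvf (x i)))).symm
        _ = ∑ z : X, ∑ i : Fin r, (∑ x ∈ Finset.univ.filter (fun x : Fin r → X => x i = z),
              μ x) * Real.log (mvf z) := by
            rw [Finset.sum_comm]
            refine Finset.sum_congr rfl fun z _ => Finset.sum_congr rfl fun i _ => ?_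
            rw [Finset.sum_mul]
            refine Finset.sum_congr rfl fun x hx => ?_
            rw [(Finset.mem_filter.mp hx).2]
        _ = ∑ z : X, ((r:ℝ) * ν z) * Real.log (mvf z) := by
            refine Finset.sum_congr rfl fun z _ => ?_
            rw [← Finset.sum_mul]
            have := hcons z
            have h2 : ∑ i : Fin r, ∑ x ∈ Finset.univ.filter (fun x : Fin r → X => x i = z),
                μ x = (r:ℝ) * ν z := by
              field_simp at this
              linarith [this]
            rw [h2]
        _ = (r:ℝ) * ∑ z : X, ν z * Real.log (mvf z) := by
            rw [Finset.mul_sum]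
            exact Finset.sum_congr rfl fun z _ => by ring
    rw [hswap] at E2
    have hrne : (r:ℝ) ≠ 0 := hr'.ne'
    have hinv : (r:ℝ) * (r:ℝ)⁻¹ = 1 := mul_inv_cancel₀ hrne
    linear_combination (-(l:ℝ)/(r:ℝ)) * E2 + ((l:ℝ)-1) * E1 - (l:ℝ) * E3 - (l:ℝ) * E4
      - ((l:ℝ) * ∑ z : X, ν z * Real.log (mvf z)) * hinv
  · -- third identity
    have hν1 : ∑ z : X, ν z = 1 := by
      rw [Finset.sum_congr rfl fun z _ => hνdef z, ← Finset.sum_div]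
      rw [show ∑ z : X, h z * mfv z ^ l = Zv by
        rw [hZv]; exact Finset.sum_congr rfl fun z _ => by rw [hZvx z]]
      exact div_self hZvpos.ne'
    have hlogν : ∀ z : X, Real.log (ν z)
        = Real.log (h z) + (l:ℝ) * Real.log (mfv z) - Real.log Zv := by
      intro z
      rw [hνdef z, Real.log_div (mul_pos (hh z) (pow_pos (hmfv z) l)).ne' hZvpos.ne',
        Real.log_mul (hh z).ne' (pow_pos (hmfv z) l).ne', Real.log_pow]
    have E1 : ∑ z : X, ν z * Real.log (ν z)
        = ∑ z : X, ν z * Real.log (h z) + (l:ℝ) * ∑ z : X, ν z * Real.log (mfv z)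
          - Real.log Zv := by
      have step : ∑ z : X, ν z * Real.log (ν z)
          = ∑ z : X, ν z * (Real.log (h z) + (l:ℝ) * Real.log (mfv z) - Real.log Zv) :=
        Finset.sum_congr rfl fun z _ => by rw [hlogν z]
      rw [step]
      simp only [mul_sub, mul_add]
      rw [Finset.sum_sub_distrib, Finset.sum_add_distrib, ← Finset.sum_mul, hν1, one_mul]
      congr 1
      congr 1
      rw [Finset.mul_sum]
      exact Finset.sum_congr rfl fun z _ => by ring
    have hZvxsum : ∑ z : X, ν z * Real.log (Zvx z)
        = (l:ℝ) * ∑ z : X, ν z * Real.log (mfv z) := by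
      rw [Finset.mul_sum]
      refine Finset.sum_congr rfl fun z _ => ?_
      rw [hZvx z, Real.log_pow]
      ring
    linear_combination E1 - hZvxsum
end

section
/- Let X be a finite alphabet, l, r positive integers, f : X^r → ℝ≥0 not identically zero, and h : X → ℝ strictly positive (the magnetic field). Suppose strictly positive normalized messages m_{v→f}, m_{f→v} : X → ℝ (each summing to 1) satisfy: m_{v→f}(x) = h(x)m_{f→v}(x)^{l−1}/Σ_z h(z)m_{f→v}(z)^{l−1}, and m_{f→v}(x) = B(x)/Σ_z B(z) with B(x) := Σ_{i=1}^r Σ_{x∈X^r : x_i = x} f(x)∏_{j≠i} m_{v→f}(x_j). Define Z_v := Σ_x h(x)m_{f→v}(x)^l, Z_f := Σ_{x∈X^r} f(x)∏_{i=1}^r m_{v→f}(x_i), Z_{fv} := Σ_x m_{f→v}(x)m_{v→f}(x), ν(x) := h(x)m_{f→v}(x)^l/Z_v, μ(x) := f(x)∏_{i=1}^r m_{v→f}(x_i)/Z_f. Then (ν,μ) satisfies the consistency condition (1/r)Σ_{i=1}^r Σ_{x∈X^r : x_i = z} μ(x) = ν(z) for all z ∈ X, and (l/r)H(μ) − (l−1)H(ν)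 + (l/r)Σ_{x∈X^r} μ(x) log f(x) + Σ_{x∈X} ν(x) log h(x) = (l/r) log Z_f + log Z_v − l log Z_{fv}. -/
open Finset

/-- for the (l,r)-regular ensemble with magnetic field h, at a BP fixed point
the induced beliefs `(ν,μ)` are consistent and the exponent
`(l/r)H(μ) − (l−1)H(ν) + (l/r)Σ μ log f + Σ ν log h` equals
`(l/r)log Z_f + log Z_v − l log Z_fv`. -/
theorem magnetic_field_bp_fixed_point_value
    {X : Type*} [Fintype X] [DecidableEq X] [Nonempty X]
    (l r : ℕ) (hl : 0 < l) (hr : 0 < r)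
    (f : (Fin r → X) → ℝ) (hf : ∀ x, 0 ≤ f x) (hfne : ∃ x, f x ≠ 0)
    (h : X → ℝ) (hh : ∀ x, 0 < h x)
    (mvf mfv : X → ℝ) (hmvf : ∀ x, 0 < mvf x) (hmfv : ∀ x, 0 < mfv x)
    (hmvf1 : ∑ x : X, mvf x = 1) (hmfv1 : ∑ x : X, mfv x = 1)
    (hbp1 : ∀ x, mvf x = h x * mfv x ^ (l - 1) / ∑ z : X, h z * mfv z ^ (l - 1))
    (hbp2 : ∀ x, mfv x = bpB f mvf x / ∑ z : X, bpB f mvf z)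
    (Zv Zf Zfv : ℝ)
    (hZv : Zv = ∑ x : X, h x * mfv x ^ l)
    (hZf : Zf = ∑ y : Fin r → X, f y * ∏ i, mvf (y i))
    (hZfv : Zfv = ∑ x : X, mfv x * mvf x)
    (ν : X → ℝ) (hνdef : ∀ x, ν x = h x * mfv x ^ l / Zv)
    (μ : (Fin r → X) → ℝ) (hμdef : ∀ x, μ x = (f x * ∏ i, mvf (x i)) / Zf) :
    (∀ z : X,
      (1 / (r : ℝ)) * ∑ i : Fin r,
          ∑ x ∈ Finset.univ.filter (fun x : Fin r → X => x i = z), μ x = ν z) ∧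
    ((l : ℝ) / (r : ℝ)) * (-∑ x : Fin r → X, μ x * Real.log (μ x))
        - ((l : ℝ) - 1) * (-∑ x : X, ν x * Real.log (ν x))
        + ((l : ℝ) / (r : ℝ)) * ∑ x : Fin r → X, μ x * Real.log (f x)
        + ∑ x : X, ν x * Real.log (h x)
      = ((l : ℝ) / (r : ℝ)) * Real.log Zf + Real.log Zv - (l : ℝ) * Real.log Zfv := by
  classical
  have hl1 : 1 ≤ l := hl
  have hCpos : (0:ℝ) < ∑ z : X, h z * mfv z ^ (l - 1) :=
    Finset.sum_pos (fun z _ => mul_pos (hh z) (pow_pos (hmfv z) _)) Finset.univ_nonempty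
  set C : ℝ := ∑ z : X, h z * mfv z ^ (l - 1) with hCdef
  have hZvpos : 0 < Zv := by
    rw [hZv]
    exact Finset.sum_pos (fun z _ => mul_pos (hh z) (pow_pos (hmfv z) _)) Finset.univ_nonempty
  have hZfvpos : 0 < Zfv := by
    rw [hZfv]
    exact Finset.sum_pos (fun z _ => mul_pos (hmfv z) (hmvf z)) Finset.univ_nonempty
  have hZfpos : 0 < Zf := by
    obtain ⟨x0, hx0⟩ := hfne
    rw [hZf]
    refine Finset.sum_pos'
      (fun y _ => mul_nonneg (hf y) (Finset.prod_nonneg fun i _ => (hmvf _).le))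
      ⟨x0, Finset.mem_univ _, ?_⟩
    exact mul_pos ((hf x0).lt_of_ne (Ne.symm hx0)) (Finset.prod_pos fun i _ => hmvf _)
  have hmvfC : ∀ x, mvf x * C = h x * mfv x ^ (l - 1) := by
    intro x
    rw [hbp1 x]
    field_simp
  have hkey : ∀ x, mvf x * mfv x * C = h x * mfv x ^ l := by
    intro x
    have h1 := hmvfC x
    have hp : mfv x ^ (l - 1) * mfv x = mfv x ^ l := by
      rw [← pow_succ, Nat.sub_add_cancel hl1]
    calc mvf x * mfv x * C = (mvf x * C) * mfv x := by ring
      _ = h x * mfv x ^ (l - 1) * mfv x := by rw [h1]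
      _ = h x * mfv x ^ l := by rw [mul_assoc, hp]
  have hZfvC : Zfv * C = Zv := by
    rw [hZfv, hZv, Finset.sum_mul]
    exact Finset.sum_congr rfl fun z _ => by rw [← hkey z]; ring
  have hνalt : ∀ z, ν z = mvf z * mfv z / Zfv := by
    intro z
    rw [hνdef z, div_eq_div_iff hZvpos.ne' hZfvpos.ne']
    calc h z * mfv z ^ l * Zfv = (mvf z * mfv z * C) * Zfv := by rw [hkey z]
      _ = mvf z * mfv z * Zv := by rw [← hZfvC]; ring
  set S : ℝ := ∑ z : X, bpB f mvf z with hSdef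
  have hSne : S ≠ 0 := by
    intro h0
    have h1 := hbp2 (Classical.arbitrary X)
    rw [h0, div_zero] at h1
    exact (hmfv _).ne' h1
  have hB : ∀ x, bpB f mvf x = mfv x * S := by
    intro x
    rw [hbp2 x, div_mul_cancel₀ _ hSne]
  have hsum1 : ∀ (i : Fin r) (z : X),
      ∑ y ∈ Finset.univ.filter (fun y : Fin r → X => y i = z), f y * ∏ j, mvf (y j)
      = mvf z * ∑ y ∈ Finset.univ.filter (fun y : Fin r → X => y i = z),
          f y * ∏ j ∈ Finset.univ.erase i, mvf (y j) := by
    intro i z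
    rw [Finset.mul_sum]
    refine Finset.sum_congr rfl fun y hy => ?_
    rw [Finset.mem_filter] at hy
    rw [← Finset.mul_prod_erase Finset.univ (fun j => mvf (y j)) (Finset.mem_univ i), hy.2]
    ring
  have hmvfB : ∀ z, mvf z * bpB f mvf z
      = ∑ i : Fin r, ∑ y ∈ Finset.univ.filter (fun y : Fin r → X => y i = z),
          f y * ∏ j, mvf (y j) := by
    intro z
    unfold bpB
    rw [Finset.mul_sum]
    refine Finset.sum_congr rfl fun i _ => ?_
    exact (hsum1 i z).symm
  have hZfvS : Zfv * S = r * Zf := by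
    have h1 : ∑ z : X, mvf z * bpB f mvf z = Zfv * S := by
      rw [hZfv, Finset.sum_mul]
      exact Finset.sum_congr rfl fun z _ => by rw [hB z]; ring
    have h2 : ∑ z : X, mvf z * bpB f mvf z = r * Zf := by
      simp_rw [hmvfB]
      rw [Finset.sum_comm]
      have h3 : ∀ i : Fin r, ∑ z : X, ∑ y ∈ Finset.univ.filter
          (fun y : Fin r → X => y i = z), f y * ∏ j, mvf (y j) = Zf := by
        intro i
        rw [Finset.sum_fiberwise, hZf]
      simp_rw [h3]
      simp [mul_comm]
    rw [← h1, h2]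
  have hcons : ∀ z : X, ∑ i : Fin r,
      ∑ x ∈ Finset.univ.filter (fun x : Fin r → X => x i = z), μ x = r * ν z := by
    intro z
    have h1 : ∑ i : Fin r, ∑ x ∈ Finset.univ.filter (fun x : Fin r → X => x i = z), μ x
        = (mvf z * bpB f mvf z) / Zf := by
      simp_rw [hμdef, ← Finset.sum_div]
      rw [hmvfB z]
    rw [h1, hB z, hνalt z]
    field_simp
    linear_combination (mvf z * mfv z) * hZfvS
  have hμsum : ∑ x : Fin r → X, μ x = 1 := by
    simp_rw [hμdef]
    rw [← Finset.sum_div, ← hZf, div_self hZfpos.ne']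
  have hνsum : ∑ x : X, ν x = 1 := by
    simp_rw [hνdef]
    rw [← Finset.sum_div, ← hZv, div_self hZvpos.ne']
  have hμterm : ∀ x, μ x * Real.log (μ x)
      = μ x * Real.log (f x) + μ x * (∑ i : Fin r, Real.log (mvf (x i)))
        - μ x * Real.log Zf := by
    intro x
    by_cases hx : f x = 0
    · simp [hμdef, hx]
    · have hprod : (0:ℝ) < ∏ i, mvf (x i) := Finset.prod_pos fun i _ => hmvf _
      have hfx : 0 < f x := (hf x).lt_of_ne (Ne.symm hx)
      rw [hμdef x, Real.log_div (mul_pos hfx hprod).ne' hZfpos.ne',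
        Real.log_mul hfx.ne' hprod.ne',
        Real.log_prod (fun i _ => (hmvf _).ne')]
      ring
  have e1 : ∑ x : Fin r → X, μ x * Real.log (μ x)
      = (∑ x : Fin r → X, μ x * Real.log (f x))
        + (r : ℝ) * ∑ z : X, ν z * Real.log (mvf z) - Real.log Zf := by
    have hG : ∑ x : Fin r → X, μ x * (∑ i : Fin r, Real.log (mvf (x i)))
        = (r : ℝ) * ∑ z : X, ν z * Real.log (mvf z) := by
      simp_rw [Finset.mul_sum]
      rw [Finset.sum_comm]
      have hstep : ∀ i : Fin r, ∑ x : Fin r → X, μ x * Real.log (mvf (x i))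
          = ∑ z : X, (∑ x ∈ Finset.univ.filter (fun x : Fin r → X => x i = z), μ x)
              * Real.log (mvf z) := by
        intro i
        rw [← Finset.sum_fiberwise Finset.univ (fun x : Fin r → X => x i)
          (fun x => μ x * Real.log (mvf (x i)))]
        refine Finset.sum_congr rfl fun z _ => ?_
        rw [Finset.sum_mul]
        refine Finset.sum_congr rfl fun x hx => ?_
        rw [Finset.mem_filter] at hx
        rw [hx.2]
      simp_rw [hstep]
      rw [Finset.sum_comm]
      refine Finset.sum_congr rfl fun z _ => ?_
      rw [← Finset.sum_mul, hcons z]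
      ring
    calc ∑ x : Fin r → X, μ x * Real.log (μ x)
        = ∑ x : Fin r → X, (μ x * Real.log (f x)
            + μ x * (∑ i : Fin r, Real.log (mvf (x i))) - μ x * Real.log Zf) :=
          Finset.sum_congr rfl fun x _ => hμterm x
      _ = (∑ x : Fin r → X, μ x * Real.log (f x))
          + (∑ x : Fin r → X, μ x * (∑ i : Fin r, Real.log (mvf (x i))))
          - (∑ x : Fin r → X, μ x) * Real.log Zf := by
          rw [Finset.sum_sub_distrib, Finset.sum_add_distrib, Finset.sum_mul]
      _ = _ := by rw [hG, hμsum, one_mul]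
  have e2 : ∑ z : X, ν z * Real.log (ν z)
      = (∑ z : X, ν z * Real.log (h z))
        + (l : ℝ) * (∑ z : X, ν z * Real.log (mfv z)) - Real.log Zv := by
    have hterm : ∀ z, ν z * Real.log (ν z)
        = ν z * Real.log (h z) + (l:ℝ) * (ν z * Real.log (mfv z)) - ν z * Real.log Zv := by
      intro z
      rw [hνdef z, Real.log_div (mul_pos (hh z) (pow_pos (hmfv z) l)).ne' hZvpos.ne',
        Real.log_mul (hh z).ne' (pow_pos (hmfv z) l).ne', Real.log_pow]
      ring
    calc ∑ z : X, ν z * Real.log (ν z)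
        = ∑ z : X, (ν z * Real.log (h z) + (l:ℝ) * (ν z * Real.log (mfv z))
            - ν z * Real.log Zv) := Finset.sum_congr rfl fun z _ => hterm z
      _ = _ := by
          rw [Finset.sum_sub_distrib, Finset.sum_add_distrib, ← Finset.mul_sum,
            ← Finset.sum_mul, hνsum, one_mul]
  have hcast : ((l - 1 : ℕ) : ℝ) = (l:ℝ) - 1 := by
    rw [Nat.cast_sub hl1, Nat.cast_one]
  have hmvflog : ∀ z, Real.log (mvf z)
      = Real.log (h z) + ((l:ℝ) - 1) * Real.log (mfv z) - Real.log C := by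
    intro z
    rw [hbp1 z, Real.log_div (mul_pos (hh z) (pow_pos (hmfv z) _)).ne' hCpos.ne',
      Real.log_mul (hh z).ne' (pow_pos (hmfv z) _).ne', Real.log_pow, hcast]
  have e3 : ∑ z : X, ν z * Real.log (mvf z)
      = (∑ z : X, ν z * Real.log (h z))
        + ((l:ℝ) - 1) * (∑ z : X, ν z * Real.log (mfv z)) - Real.log C := by
    calc ∑ z : X, ν z * Real.log (mvf z)
        = ∑ z : X, (ν z * Real.log (h z) + ((l:ℝ) - 1) * (ν z * Real.log (mfv z))
            - ν z * Real.log C) :=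
          Finset.sum_congr rfl fun z _ => by rw [hmvflog z]; ring
      _ = _ := by
          rw [Finset.sum_sub_distrib, Finset.sum_add_distrib, ← Finset.mul_sum,
            ← Finset.sum_mul, hνsum, one_mul]
  have e4 : Real.log C = Real.log Zv - Real.log Zfv := by
    have hc : C = Zv / Zfv := by
      rw [eq_div_iff hZfvpos.ne', ← hZfvC]; ring
    rw [hc, Real.log_div hZvpos.ne' hZfvpos.ne']
  have hrne : (r:ℝ) ≠ 0 := Nat.cast_ne_zero.mpr hr.ne'
  constructor
  · intro z
    rw [hcons z, one_div, inv_mul_cancel_left₀ hrne]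
  · have hrinv : (r:ℝ) * (r:ℝ)⁻¹ = 1 := mul_inv_cancel₀ hrne
    linear_combination (-((l:ℝ)/(r:ℝ))) * e1 + ((l:ℝ) - 1) * e2
      + (-(l:ℝ)) * e3 + (l:ℝ) * e4
      + (-(l:ℝ) * ∑ z : X, ν z * Real.log (mvf z)) * hrinv
end
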